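/- Assume 0 < p, q < 1, 0 < p_s, p_s^e < 1, and 0 < p_α ≤ 1. Then the marginal reconstruction accuracy at the legitimate receiver satisfies ∑_{b∈{0,1}} π(0,0,b) = q (q + p_α p_s (1−q)) / ((p+q)(p+q + p_α p_s (1−p−q))) and ∑_{b∈{0,1}} π(1,1,b) = p (p + p_α p_s (1−p)) / ((p+q)(p+q + p_α p_s (1−p−q))). -/

import Mathlib

open Matrix

noncomputable section

/-- λ11 = p_α p_s p_s^e -/
def l11 (ps pse pa : ℝ) : ℝ := pa * ps * pse
/-- λ10 = p_α p_s (1 − p_s^e) -/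
def l10 (ps pse pa : ℝ) : ℝ := pa * ps * (1 - pse)
/-- λ01 = p_α (1 − p_s) p_s^e -/
def l01 (ps pse pa : ℝ) : ℝ := pa * (1 - ps) * pse
/-- λ00 = p_α (1 − p_s)(1 − p_s^e) + (1 − p_α) -/
def l00 (ps pse pa : ℝ) : ℝ := pa * (1 - ps) * (1 - pse) + (1 - pa)
/-- P_A = λ11 + λ10 -/
def PA (ps pse pa : ℝ) : ℝ := l11 ps pse pa + l10 ps pse pa
/-- P_B = λ11 + λ01 -/
def PB (ps pse pa : ℝ) : ℝ := l11 ps pse pa + l01 ps pse pa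

/-- Source transition matrix Q. -/
def Qm (p q : ℝ) : Matrix (Fin 2) (Fin 2) ℝ := !![1 - p, p; q, 1 - q]

/-- Stationary distribution of the source: v_0 = q/(p+q), v_1 = p/(p+q). -/
def vstat (p q : ℝ) : Fin 2 → ℝ := ![q / (p + q), p / (p + q)]

/-- T1(x,a,b) = δ(a,b) v_a λ11 [(I − λ00 Q)⁻¹]_{a,x} -/
def T1 (p q ps pse pa : ℝ) (x a b : Fin 2) : ℝ :=
  (if a = b then (1 : ℝ) else 0) * vstat p q a * l11 ps pse pa *
    ((1 - l00 ps pse pa • Qm p q)⁻¹ a x)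

/-- T2(x,a,b) = v_b λ10 P_B [Q (I − (1−P_B) Q)⁻¹]_{b,a} [(I − λ00 Q)⁻¹]_{a,x} -/
def T2 (p q ps pse pa : ℝ) (x a b : Fin 2) : ℝ :=
  vstat p q b * l10 ps pse pa * PB ps pse pa *
    ((Qm p q * (1 - (1 - PB ps pse pa) • Qm p q)⁻¹) b a) *
    ((1 - l00 ps pse pa • Qm p q)⁻¹ a x)

/-- T3(x,a,b) = v_a λ01 P_A [Q (I − (1−P_A) Q)⁻¹]_{a,b} [(I − λ00 Q)⁻¹]_{b,x} -/
def T3 (p q ps pse pa : ℝ) (x a b : Fin 2) : ℝ :=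
  vstat p q a * l01 ps pse pa * PA ps pse pa *
    ((Qm p q * (1 - (1 - PA ps pse pa) • Qm p q)⁻¹) a b) *
    ((1 - l00 ps pse pa • Qm p q)⁻¹ b x)

/-- π(x,a,b) = T1 + T2 + T3 -/
def piDist (p q ps pse pa : ℝ) (x a b : Fin 2) : ℝ :=
  T1 p q ps pse pa x a b + T2 p q ps pse pa x a b + T3 p q ps pse pa x a b

lemma matA (p q c : ℝ) : (1 : Matrix (Fin 2) (Fin 2) ℝ) - c • Qm p q =
    !![1 - c*(1-p), -(c*p); -(c*q), 1 - c*(1-q)] := by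
  ext i j
  fin_cases i <;> fin_cases j <;> simp [Qm, Matrix.one_apply]

lemma invA (p q c : ℝ) :
    ((1 : Matrix (Fin 2) (Fin 2) ℝ) - c • Qm p q)⁻¹ =
      ((1-c)*(1-c*(1-p-q)))⁻¹ • !![1 - c*(1-q), c*p; c*q, 1 - c*(1-p)] := by
  rw [matA, Matrix.inv_def, Matrix.adjugate_fin_two, Matrix.det_fin_two_of]
  have : (1 - c*(1-p)) * (1 - c*(1-q)) - -(c*p) * -(c*q) = (1-c)*(1-c*(1-p-q)) := by ring
  rw [this, Ring.inverse_eq_inv]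
  congr 1
  ext i j; fin_cases i <;> fin_cases j <;> simp

-- step lemmas, to be appended after defs+invA
section
variable (p q : ℝ)

/-- stationary sum: v0 * R_{0a} + v1 * R_{1a} = v_a / c  where R = Q(1-(1-c)Q)⁻¹ -/
lemma L2 (c : ℝ) (hpq : p + q ≠ 0) (hc : c ≠ 0) (hk : 1 - (1-c)*(1-p-q) ≠ 0) (a : Fin 2) :
    (q/(p+q)) * ((Qm p q * (1 - (1-c) • Qm p q)⁻¹) 0 a)
      + (p/(p+q)) * ((Qm p q * (1 - (1-c) • Qm p q)⁻¹) 1 a)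
    = (1/c) * vstat p q a := by
  rw [invA p q (1-c)]
  have h1 : (1:ℝ) - (1-c) = c := by ring
  fin_cases a <;>
  · simp only [vstat, Qm, Matrix.mul_apply, Fin.sum_univ_two, Matrix.smul_apply,
      Matrix.cons_val', Matrix.cons_val_zero, Matrix.cons_val_one, Matrix.head_cons,
      Matrix.empty_val', Matrix.cons_val_fin_one, Matrix.of_apply, smul_eq_mul,
      Fin.isValue, Matrix.head_fin_const, Fin.zero_eta, Fin.mk_one]
    rw [h1]
    field_simp
    ring

/-- resolvent: (1-u-c) * Σ_b RA_{a b} B_{b x} = inv_{a x} - B_{a x} -/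
lemma L3 (u c : ℝ) (hu : u ≠ 0) (h4 : 1 - (1-u)*(1-p-q) ≠ 0)
    (hc1 : 1 - c ≠ 0) (hc2 : 1 - c*(1-p-q) ≠ 0) (a x : Fin 2) :
    (1-u-c) * (((Qm p q * (1 - (1-u) • Qm p q)⁻¹) a 0) * ((1 - c • Qm p q)⁻¹ 0 x)
      + ((Qm p q * (1 - (1-u) • Qm p q)⁻¹) a 1) * ((1 - c • Qm p q)⁻¹ 1 x))
    = (1 - (1-u) • Qm p q)⁻¹ a x - (1 - c • Qm p q)⁻¹ a x := by
  rw [invA p q (1-u), invA p q c]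
  have h1 : (1:ℝ) - (1-u) = u := by ring
  fin_cases a <;> fin_cases x <;>
  · simp only [Qm, Matrix.mul_apply, Fin.sum_univ_two, Matrix.smul_apply,
      Matrix.cons_val', Matrix.cons_val_zero, Matrix.cons_val_one, Matrix.head_cons,
      Matrix.empty_val', Matrix.cons_val_fin_one, Matrix.of_apply, smul_eq_mul,
      Fin.isValue, Matrix.head_fin_const, Fin.zero_eta, Fin.mk_one]
    rw [h1]
    field_simp
    ring

end


set_option maxHeartbeats 1000000 in
theorem stmt13 (p q ps pse pa : ℝ)
    (hp0 : 0 < p) (hp1 : p < 1) (hq0 : 0 < q) (hq1 : q < 1)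
    (hs0 : 0 < ps) (hs1 : ps < 1) (he0 : 0 < pse) (he1 : pse < 1)
    (ha0 : 0 < pa) (ha1 : pa ≤ 1) :
    (∑ b : Fin 2, piDist p q ps pse pa 0 0 b =
      q * (q + pa * ps * (1 - q)) /
        ((p + q) * (p + q + pa * ps * (1 - p - q)))) ∧
    (∑ b : Fin 2, piDist p q ps pse pa 1 1 b =
      p * (p + pa * ps * (1 - p)) /
        ((p + q) * (p + q + pa * ps * (1 - p - q)))) := by
  have hpq : (0:ℝ) < p + q := by linarith
  have hpq' : p + q ≠ 0 := hpq.ne'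
  have hPA0 : PA ps pse pa ≠ 0 := by unfold PA l11 l10; nlinarith [mul_pos ha0 hs0]
  have hPB0 : PB ps pse pa ≠ 0 := by unfold PB l11 l01; nlinarith [mul_pos ha0 he0]
  have hPA1 : PA ps pse pa ≤ 1 := by unfold PA l11 l10; nlinarith
  have hPB1 : PB ps pse pa ≤ 1 := by unfold PB l11 l01; nlinarith
  have hPA0' : 0 < PA ps pse pa := by unfold PA l11 l10; nlinarith [mul_pos ha0 hs0]
  have hPB0' : 0 < PB ps pse pa := by unfold PB l11 l01; nlinarith [mul_pos ha0 he0]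
  have aux : ∀ c : ℝ, 0 ≤ c → c < 1 → 1 - c*(1-p-q) ≠ 0 := by
    intro c h0 h1
    nlinarith [mul_nonneg h0 hp0.le, mul_nonneg h0 hq0.le]
  have hl00a : 0 ≤ l00 ps pse pa := by
    unfold l00; nlinarith [mul_pos (mul_pos ha0 (by linarith : (0:ℝ)<1-ps)) (by linarith : (0:ℝ)<1-pse)]
  have hl00b : l00 ps pse pa < 1 := by
    unfold l00; nlinarith [mul_pos ha0 (show (0:ℝ) < ps*(1-pse)+pse by nlinarith)]
  have h1 : 1 - l00 ps pse pa ≠ 0 := by linarith [hl00b]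
  have h2 : 1 - l00 ps pse pa * (1-p-q) ≠ 0 := aux _ hl00a hl00b
  have h4 : 1 - (1 - PA ps pse pa)*(1-p-q) ≠ 0 := aux _ (by linarith) (by linarith)
  have h6 : 1 - (1 - PB ps pse pa)*(1-p-q) ≠ 0 := aux _ (by linarith) (by linarith)
  have hlA : l01 ps pse pa = 1 - PA ps pse pa - l00 ps pse pa := by
    unfold l01 PA l11 l10 l00; ring
  have hlB : l11 ps pse pa = PA ps pse pa - l10 ps pse pa := by unfold PA; ring
  have hPBi : PB ps pse pa * (1/PB ps pse pa) = 1 := by field_simp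
  have key0 : ∑ b : Fin 2, piDist p q ps pse pa 0 0 b =
      vstat p q 0 * PA ps pse pa * ((1 - (1 - PA ps pse pa) • Qm p q)⁻¹ 0 0) := by
    have e2 := L2 p q (PB ps pse pa) hpq' hPB0 h6 0
    have e3 := L3 p q (PA ps pse pa) (l00 ps pse pa) hPA0 h4 h1 h2 0 0
    simp only [Fin.sum_univ_two, piDist, T1, T2, T3, hlA, hlB, vstat,
      Matrix.cons_val_zero, Matrix.cons_val_one, Matrix.head_cons, Fin.isValue,
      reduceIte, show ((0:Fin 2) = 1) = False by simp, if_false, if_true] at e2 e3 ⊢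
    linear_combination (l10 ps pse pa * PB ps pse pa *
        ((1 - l00 ps pse pa • Qm p q)⁻¹ 0 0)) * e2 +
      (q/(p+q) * PA ps pse pa) * e3 +
      (q/(p+q) * l10 ps pse pa * ((1 - l00 ps pse pa • Qm p q)⁻¹ 0 0)) * hPBi
  have key1 : ∑ b : Fin 2, piDist p q ps pse pa 1 1 b =
      vstat p q 1 * PA ps pse pa * ((1 - (1 - PA ps pse pa) • Qm p q)⁻¹ 1 1) := by
    have e2 := L2 p q (PB ps pse pa) hpq' hPB0 h6 1
    have e3 := L3 p q (PA ps pse pa) (l00 ps pse pa) hPA0 h4 h1 h2 1 1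
    simp only [Fin.sum_univ_two, piDist, T1, T2, T3, hlA, hlB, vstat,
      Matrix.cons_val_zero, Matrix.cons_val_one, Matrix.head_cons, Fin.isValue,
      reduceIte, show ((1:Fin 2) = 0) = False by simp, if_false, if_true] at e2 e3 ⊢
    linear_combination (l10 ps pse pa * PB ps pse pa *
        ((1 - l00 ps pse pa • Qm p q)⁻¹ 1 1)) * e2 +
      (p/(p+q) * PA ps pse pa) * e3 +
      (p/(p+q) * l10 ps pse pa * ((1 - l00 ps pse pa • Qm p q)⁻¹ 1 1)) * hPBi
  have fin : ∀ c : ℝ, c ≠ 0 → 1 - (1-c)*(1-p-q) ≠ 0 →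
      ((1 - (1-c) • Qm p q)⁻¹ 0 0 = (q + c*(1-q)) / (c * (p+q+c*(1-p-q))) ∧
       (1 - (1-c) • Qm p q)⁻¹ 1 1 = (p + c*(1-p)) / (c * (p+q+c*(1-p-q)))) := by
    intro c hc hk
    rw [invA p q (1-c)]
    have h1 : (1:ℝ) - (1-c) = c := by ring
    have hk' : p+q+c*(1-p-q) ≠ 0 := by intro h; apply hk; linarith [h]
    constructor <;>
    · simp only [Matrix.smul_apply, Matrix.cons_val', Matrix.cons_val_zero,
        Matrix.cons_val_one, Matrix.head_cons, Matrix.empty_val',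
        Matrix.cons_val_fin_one, Matrix.of_apply, smul_eq_mul, Matrix.head_fin_const]
      rw [h1, eq_div_iff (mul_ne_zero hc hk'), inv_mul_eq_div, div_mul_eq_mul_div,
        div_eq_iff (mul_ne_zero hc hk)]
      ring
  have hfin := fin (PA ps pse pa) hPA0 h4
  have hPAe : PA ps pse pa = pa * ps := by unfold PA l11 l10; ring
  constructor
  · rw [key0, hfin.1, hPAe]
    simp only [vstat, Matrix.cons_val_zero]
    have hd : p+q+pa*ps*(1-p-q) ≠ 0 := by rw [hPAe] at h4; intro h; apply h4; linarith
    field_simp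
  · rw [key1, hfin.2, hPAe]
    simp only [vstat, Matrix.cons_val_one, Matrix.head_cons, Matrix.cons_val_zero]
    have hd : p+q+pa*ps*(1-p-q) ≠ 0 := by rw [hPAe] at h4; intro h; apply h4; linarith
    field_simp
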